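/- arXiv:2106.11639 — 3 statements merged into one kernel-verified Lean document; each statement's English description precedes it below -/
import Mathlib

section
/- Let g : (0,∞) → (0,∞) satisfy g(λt) ≤ λ^{s_g} g(t) for all λ ≥ 1 and t > 0, with s_g ≥ 1, and let σ > s_g + 1. Fix 0 < ε < σ − s_g − 1. Then for every λ > 0, (1/g^{-1}(λ)) ∫₀^{g^{-1}(λ)} g(t)^{-1/(σ−1)} dt ≤ (σ−1)/(σ − s_g − 1 − ε) · λ^{−1/(σ−1)}, where g^{-1} denotes the inverse of the strictly increasing function g. -/
open MeasureTheory

/-- Estimate `I₁` (eq. (may103)): if `g(λt) ≤ λ^{s_g} g(t)` for `λ ≥ 1`, `t > 0`, with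
`s_g ≥ 1`, `σ > s_g + 1` and `0 < ε < σ - s_g - 1`, then for every `λ > 0`,
`(1/g⁻¹(λ)) ∫₀^{g⁻¹(λ)} g(t)^{-1/(σ-1)} dt ≤ (σ-1)/(σ-s_g-1-ε) · λ^{-1/(σ-1)}`. -/
theorem I1_estimate (g ginv : ℝ → ℝ) (sg σ ε : ℝ)
    (hsg : 1 ≤ sg) (hσ : sg + 1 < σ) (hε : 0 < ε) (hε' : ε < σ - sg - 1)
    (hgpos : ∀ t > (0 : ℝ), 0 < g t)
    (hmono : StrictMonoOn g (Set.Ioi (0 : ℝ)))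
    (hinvpos : ∀ s > (0 : ℝ), 0 < ginv s)
    (hinv : ∀ s > (0 : ℝ), g (ginv s) = s)
    (hinv' : ∀ t > (0 : ℝ), ginv (g t) = t)
    (hupper : ∀ l ≥ (1 : ℝ), ∀ t > (0 : ℝ), g (l * t) ≤ l ^ sg * g t) :
    ∀ l > (0 : ℝ),
      (1 / ginv l) * ∫ t in Set.Ioc (0 : ℝ) (ginv l), (g t) ^ (-(1 / (σ - 1))) ≤
        ((σ - 1) / (σ - sg - 1 - ε)) * l ^ (-(1 / (σ - 1))) := by
  intro l hl
  set T : ℝ := ginv l with hTdef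
  have hT : 0 < T := hinvpos l hl
  have hσ1 : (0 : ℝ) < σ - 1 := by linarith
  set c : ℝ := 1 / (σ - 1) with hcdef
  have hc : 0 < c := by positivity
  set r : ℝ := -(sg * c) with hrdef
  have hr : -1 < r := by
    have : sg * c < 1 := by
      rw [hcdef, mul_one_div, div_lt_one hσ1]; linarith
    rw [hrdef]; linarith
  have hr1 : 0 < r + 1 := by linarith
  set C : ℝ := l ^ (-c) * T ^ (sg * c) with hCdef
  have hC : 0 < C := by
    have := Real.rpow_pos_of_pos hl (-c)
    have := Real.rpow_pos_of_pos hT (sg * c)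
    positivity
  have hlc : (0:ℝ) < l ^ (-c) := Real.rpow_pos_of_pos hl _
  -- pointwise bound
  have hbound : ∀ t ∈ Set.Ioc (0:ℝ) T, (g t) ^ (-c) ≤ C * t ^ r := by
    intro t ht
    obtain ⟨ht0, htT⟩ := ht
    have hgt : 0 < g t := hgpos t ht0
    have h1 : l ≤ (T / t) ^ sg * g t := by
      have hge : (1:ℝ) ≤ T / t := (le_div_iff₀ ht0).mpr (by linarith)
      have := hupper (T / t) hge t ht0
      rwa [div_mul_cancel₀ _ ht0.ne', hinv l hl] at this
    have key : (T / t) ^ sg * (t / T) ^ sg = 1 := by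
      rw [← Real.mul_rpow (by positivity) (by positivity)]
      have : T / t * (t / T) = 1 := by field_simp
      rw [this, Real.one_rpow]
    have h2 : l * (t / T) ^ sg ≤ g t := by
      calc l * (t / T) ^ sg ≤ ((T / t) ^ sg * g t) * (t / T) ^ sg :=
            mul_le_mul_of_nonneg_right h1 (by positivity)
        _ = g t * ((T / t) ^ sg * (t / T) ^ sg) := by ring
        _ = g t := by rw [key, mul_one]
    have h3 : (g t) ^ (-c) ≤ (l * (t / T) ^ sg) ^ (-c) :=
      Real.rpow_le_rpow_of_nonpos (by positivity) h2 (by linarith)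
    refine h3.trans_eq ?_
    rw [Real.mul_rpow hl.le (by positivity),
      ← Real.rpow_mul (by positivity : (0:ℝ) ≤ t / T),
      show sg * -c = r from by rw [hrdef]; ring,
      Real.div_rpow ht0.le hT.le, hCdef,
      show sg * c = -r from by rw [hrdef]; ring,
      Real.rpow_neg hT.le]
    field_simp
    rw [show c * sg = -r from by rw [hrdef]; ring]
  -- integrability of the dominating function
  have hint2 : IntegrableOn (fun t : ℝ => C * t ^ r) (Set.Ioc 0 T) := by
    have h := (intervalIntegral.intervalIntegrable_rpow' (a := 0) (b := T) hr).const_mul C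
    exact (intervalIntegrable_iff_integrableOn_Ioc_of_le hT.le).mp h
  -- value of the dominating integral
  have hval : ∫ t in Set.Ioc (0:ℝ) T, C * t ^ r = C * (T ^ (r + 1) / (r + 1)) := by
    rw [integral_const_mul, ← intervalIntegral.integral_of_le hT.le,
      integral_rpow (Or.inl hr), Real.zero_rpow (by linarith : r + 1 ≠ 0)]
    ring
  have hRHSnn : 0 ≤ ((σ - 1) / (σ - sg - 1 - ε)) * l ^ (-(1 / (σ - 1))) := by
    have : (0:ℝ) < σ - sg - 1 - ε := by linarith
    positivity
  by_cases hi : IntegrableOn (fun t => (g t) ^ (-c)) (Set.Ioc 0 T)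
  · have hmonoInt : ∫ t in Set.Ioc (0:ℝ) T, (g t) ^ (-c) ≤
        ∫ t in Set.Ioc (0:ℝ) T, C * t ^ r :=
      setIntegral_mono_on hi hint2 measurableSet_Ioc hbound
    have step : (1 / T) * ∫ t in Set.Ioc (0:ℝ) T, (g t) ^ (-c) ≤
        (1 / T) * (C * (T ^ (r + 1) / (r + 1))) := by
      rw [← hval]
      exact mul_le_mul_of_nonneg_left hmonoInt (by positivity)
    refine step.trans ?_
    have hTpow : T ^ (sg * c) * T ^ (r + 1) = T := by
      rw [← Real.rpow_add hT, show sg * c + (r + 1) = 1 from by rw [hrdef]; ring,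
        Real.rpow_one]
    have heq : (1 / T) * (C * (T ^ (r + 1) / (r + 1))) = l ^ (-c) * (1 / (r + 1)) := by
      rw [hCdef]
      rw [show (1 / T) * (l ^ (-c) * T ^ (sg * c) * (T ^ (r + 1) / (r + 1))) =
          l ^ (-c) * (T ^ (sg * c) * T ^ (r + 1)) / T * (1 / (r + 1)) by ring, hTpow,
        mul_div_assoc, div_self hT.ne', mul_one]
    rw [heq]
    have h1r : 1 / (r + 1) = (σ - 1) / (σ - 1 - sg) := by
      have hrr : r + 1 = (σ - 1 - sg) / (σ - 1) := by
        rw [hrdef, hcdef]; field_simp; ring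
      rw [hrr, one_div_div]
    rw [h1r]
    have hden : (0:ℝ) < σ - sg - 1 - ε := by linarith
    have hle : (σ - 1) / (σ - 1 - sg) ≤ (σ - 1) / (σ - sg - 1 - ε) := by
      apply div_le_div_of_nonneg_left (by linarith) hden (by linarith)
    calc l ^ (-c) * ((σ - 1) / (σ - 1 - sg))
        ≤ l ^ (-c) * ((σ - 1) / (σ - sg - 1 - ε)) :=
          mul_le_mul_of_nonneg_left hle hlc.le
      _ = ((σ - 1) / (σ - sg - 1 - ε)) * l ^ (-(1 / (σ - 1))) := by rw [hcdef]; ring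
  · rw [integral_undef hi, mul_zero]
    exact hRHSnn
end

section
/- Let g : (0,∞) → (0,∞) be continuous, strictly increasing and surjective, with lower index i_g > 0 in the sense that g(λt) ≥ λ^{i_g} g(t) for all λ ≥ 1 and t > 0. Fix 0 < ε < i_g and σ > 1. Then for every λ > 0, ∫_{g^{-1}(λ)}^{∞} g(t)^{-1/(σ−1)} dt/t ≤ ((σ−1)/ε) · λ^{−1/(σ−1)}. -/
open MeasureTheory

/-- Estimate `I₂` (eq. (may104)): if `g(λt) ≥ λ^{i_g} g(t)` for `λ ≥ 1`, `t > 0`, with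
`i_g > 0`, `0 < ε < i_g` and `σ > 1`, then for every `λ > 0`,
`∫_{g⁻¹(λ)}^∞ g(t)^{-1/(σ-1)} dt/t ≤ ((σ-1)/ε) λ^{-1/(σ-1)}`. -/
theorem I2_estimate (g ginv : ℝ → ℝ) (ig σ ε : ℝ)
    (hig : 0 < ig) (hσ : 1 < σ) (hε : 0 < ε) (hε' : ε < ig)
    (hgpos : ∀ t > (0 : ℝ), 0 < g t)
    (hmono : StrictMonoOn g (Set.Ioi (0 : ℝ)))
    (hinvpos : ∀ s > (0 : ℝ), 0 < ginv s)
    (hinv : ∀ s > (0 : ℝ), g (ginv s) = s)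
    (hinv' : ∀ t > (0 : ℝ), ginv (g t) = t)
    (hlow : ∀ l ≥ (1 : ℝ), ∀ t > (0 : ℝ), l ^ ig * g t ≤ g (l * t)) :
    ∀ l > (0 : ℝ),
      ∫ t in Set.Ioi (ginv l), (g t) ^ (-(1 / (σ - 1))) / t ≤
        ((σ - 1) / ε) * l ^ (-(1 / (σ - 1))) := by
  intro l hl
  set a := ginv l with ha_def
  have ha : 0 < a := hinvpos l hl
  have hga : g a = l := hinv l hl
  set p : ℝ := 1 / (σ - 1) with hp_def
  have hσ1 : 0 < σ - 1 := by linarith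
  have hp : 0 < p := by positivity
  have hep : 0 < ε * p := by positivity
  -- the dominating function
  set F : ℝ → ℝ := fun t => l ^ (-p) * a ^ (ε * p) * t ^ (-(ε * p) - 1) with hF_def
  have hexp : -(ε * p) - 1 < -1 := by linarith
  have hFint : IntegrableOn F (Set.Ioi a) :=
    (integrableOn_Ioi_rpow_of_lt hexp ha).const_mul _
  have haa : a ^ (ε * p) * a ^ (-(ε * p)) = 1 := by
    rw [← Real.rpow_add ha]; simp
  have hFval : ∫ t in Set.Ioi a, F t = ((σ - 1) / ε) * l ^ (-p) := by
    simp only [hF_def]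
    rw [MeasureTheory.integral_const_mul, integral_Ioi_rpow_of_lt hexp ha]
    have he1 : -(ε * p) - 1 + 1 = -(ε * p) := by ring
    rw [he1]
    have : l ^ (-p) * a ^ (ε * p) * (-a ^ (-(ε * p)) / (-(ε * p))) =
        (a ^ (ε * p) * a ^ (-(ε * p))) * (l ^ (-p) / (ε * p)) := by
      field_simp
    rw [this, haa, one_mul, hp_def]
    rw [eq_comm]
    field_simp
  -- pointwise bound on Ioi a
  have hbound : ∀ t ∈ Set.Ioi a, (g t) ^ (-p) / t ≤ F t := by
    intro t ht
    simp only [Set.mem_Ioi] at ht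
    have ht0 : 0 < t := lt_trans ha ht
    have hta : 1 ≤ t / a := (one_le_div ha).mpr (le_of_lt ht)
    have h1 : (t / a) ^ ig * l ≤ g t := by
      have := hlow (t / a) hta a ha
      rwa [div_mul_cancel₀ _ (ne_of_gt ha), hga] at this
    have h2 : (t / a) ^ ε ≤ (t / a) ^ ig :=
      Real.rpow_le_rpow_of_exponent_le hta (le_of_lt hε')
    have h3 : (t / a) ^ ε * l ≤ g t :=
      le_trans (by nlinarith) h1
    have hda : 0 < (t / a) ^ ε * l := by positivity
    have h4 : (g t) ^ (-p) ≤ ((t / a) ^ ε * l) ^ (-p) :=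
      Real.rpow_le_rpow_of_nonpos hda h3 (by linarith)
    have he1 : ε * (-p) = -(ε * p) := by ring
    have h5 : ((t / a) ^ ε * l) ^ (-p) = l ^ (-p) * a ^ (ε * p) * t ^ (-(ε * p)) := by
      rw [Real.mul_rpow (by positivity) (le_of_lt hl),
        ← Real.rpow_mul (by positivity : (0:ℝ) ≤ t / a), he1,
        Real.div_rpow (le_of_lt ht0) (le_of_lt ha),
        Real.rpow_neg (le_of_lt ha) (ε * p), div_eq_mul_inv, inv_inv]
      ring
    have h6 : F t = l ^ (-p) * a ^ (ε * p) * (t ^ (-(ε * p)) / t) := by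
      simp only [hF_def]
      rw [Real.rpow_sub ht0, Real.rpow_one]
    rw [h6]
    calc (g t) ^ (-p) / t ≤ ((t / a) ^ ε * l) ^ (-p) / t := by
          gcongr
      _ = l ^ (-p) * a ^ (ε * p) * (t ^ (-(ε * p)) / t) := by
          rw [h5]; ring
  -- conclude
  have hnn : (0 : ℝ → ℝ) ≤ᵐ[volume.restrict (Set.Ioi a)]
      fun t => (g t) ^ (-p) / t := by
    refine (ae_restrict_iff' measurableSet_Ioi).mpr (Filter.Eventually.of_forall ?_)
    intro t ht
    simp only [Set.mem_Ioi] at ht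
    have ht0 : 0 < t := lt_trans ha ht
    have := hgpos t ht0
    positivity
  have hle : (fun t => (g t) ^ (-p) / t) ≤ᵐ[volume.restrict (Set.Ioi a)] F := by
    refine (ae_restrict_iff' measurableSet_Ioi).mpr (Filter.Eventually.of_forall ?_)
    intro t ht
    exact hbound t ht
  calc ∫ t in Set.Ioi a, (g t) ^ (-p) / t ≤ ∫ t in Set.Ioi a, F t :=
        integral_mono_of_nonneg hnn hFint hle
    _ = ((σ - 1) / ε) * l ^ (-p) := hFval
end

section
/- Let G : [0,∞) → [0,∞) be convex, strictly increasing, G(0) = 0, with G(t)/t^{i} nondecreasing for some i > 1 and suppose ∫₁^∞ (t/G(t))^{1/(σ−1)} dt = ∞ for some σ > 1. Define H_σ(s) = (∫₀^s (t/G(t))^{1/(σ−1)} dt)^{(σ−1)/σ} (assuming the integral near 0 converges) and G_σ = G ∘ H_σ^{-1}. Then lim_{t→∞} G_σ(t)/t^{σ'} = ∞, where σ' = σ/(σ−1). -/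
open MeasureTheory

/-- If `G` is convex, strictly increasing, `G 0 = 0`, `G(t)/t^i` is nondecreasing for some
`i > 1`, and `∫₁^∞ (t/G t)^{1/(σ-1)} dt = ∞`, then with
`H_σ(s) = (∫₀^s (t/G t)^{1/(σ-1)} dt)^{(σ-1)/σ}` and `G_σ = G ∘ H_σ⁻¹`,
one has `lim_{t→∞} G_σ(t)/t^{σ'} = ∞` where `σ' = σ/(σ-1)`. -/
theorem sobolev_conjugate_superlinear (G H Hinv : ℝ → ℝ) (i σ : ℝ)
    (hi : 1 < i) (hσ : 1 < σ)
    (hGconv : ConvexOn ℝ (Set.Ici (0 : ℝ)) G)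
    (hGmono : StrictMonoOn G (Set.Ici (0 : ℝ)))
    (hG0 : G 0 = 0) (hGpos : ∀ t > (0 : ℝ), 0 < G t)
    (hGi : MonotoneOn (fun t => G t / t ^ i) (Set.Ioi (0 : ℝ)))
    (hdiv : ¬ IntegrableOn (fun t => (t / G t) ^ (1 / (σ - 1))) (Set.Ioi (1 : ℝ)))
    (hconv0 : IntegrableOn (fun t => (t / G t) ^ (1 / (σ - 1))) (Set.Ioc (0 : ℝ) 1))
    (hH : ∀ s ≥ (0 : ℝ),
      H s = (∫ t in Set.Ioc (0 : ℝ) s, (t / G t) ^ (1 / (σ - 1))) ^ ((σ - 1) / σ))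
    (hHinv : ∀ t ≥ (0 : ℝ), 0 ≤ Hinv t ∧ H (Hinv t) = t) :
    Filter.Tendsto (fun t => G (Hinv t) / t ^ (σ / (σ - 1))) Filter.atTop Filter.atTop := by
  have hσ0 : (0:ℝ) < σ := by linarith
  have hσ1 : (0:ℝ) < σ - 1 := by linarith
  have hσ0' : σ ≠ 0 := ne_of_gt hσ0
  have hσ1' : σ - 1 ≠ 0 := ne_of_gt hσ1
  set β : ℝ := 1 / (σ - 1) with hβdef
  have hβpos : 0 < β := by positivity
  set f : ℝ → ℝ := fun t => (t / G t) ^ β with hfdef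
  set F : ℝ → ℝ := fun s => ∫ t in Set.Ioc (0:ℝ) s, f t with hFdef
  have hconv0' : IntegrableOn f (Set.Ioc (0:ℝ) 1) := hconv0
  have hH' : ∀ s : ℝ, 0 ≤ s → H s = F s ^ ((σ - 1) / σ) := fun s hs => hH s hs
  have hG1 : 0 < G 1 := hGpos 1 one_pos
  -- nonnegativity of the integrand
  have hf0 : ∀ t : ℝ, 0 < t → 0 ≤ f t := by
    intro t ht
    have := hGpos t ht
    positivity
  -- measurability
  have hfae : ∀ s : ℝ, AEMeasurable f (volume.restrict (Set.Ioc (0:ℝ) s)) := by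
    intro s
    have hGae : AEMeasurable G (volume.restrict (Set.Ioc (0:ℝ) s)) :=
      aemeasurable_restrict_of_monotoneOn measurableSet_Ioc
        ((hGmono.monotoneOn).mono (fun x hx => le_of_lt hx.1))
    exact (aemeasurable_id.div hGae).pow_const β
  -- the exponent γ
  set γ : ℝ := max ((1 - i) * β + 1) 2⁻¹ with hγdef
  have hγpos : 0 < γ := lt_max_of_lt_right (by norm_num)
  have hγlt : γ < i := by
    apply max_lt
    · have : (1 - i) * β < 0 := mul_neg_of_neg_of_pos (by linarith) hβpos
      linarith
    · linarith
  set C0 : ℝ := (G 1) ^ (-β) with hC0def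
  have hC0pos : 0 < C0 := Real.rpow_pos_of_pos hG1 _
  -- lower bound on G
  have hGlb : ∀ u : ℝ, 1 ≤ u → G 1 * u ^ i ≤ G u := by
    intro u hu
    have hupos : (0:ℝ) < u := by linarith
    have h := hGi (Set.mem_Ioi.mpr one_pos) (Set.mem_Ioi.mpr hupos) hu
    simp only [Real.one_rpow, div_one] at h
    have hui : (0:ℝ) < u ^ i := Real.rpow_pos_of_pos hupos i
    calc G 1 * u ^ i ≤ (G u / u ^ i) * u ^ i := mul_le_mul_of_nonneg_right h hui.le
      _ = G u := div_mul_cancel₀ _ (ne_of_gt hui)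
  -- upper bound on f
  have hfub : ∀ u : ℝ, 1 ≤ u → f u ≤ C0 * u ^ (γ - 1) := by
    intro u hu
    have hupos : (0:ℝ) < u := by linarith
    have hGu : 0 < G u := hGpos u hupos
    have hui : (0:ℝ) < u ^ i := Real.rpow_pos_of_pos hupos i
    have h1 : u / G u ≤ u / (G 1 * u ^ i) :=
      div_le_div_of_nonneg_left hupos.le (by positivity) (hGlb u hu)
    have h2 : u / (G 1 * u ^ i) = u ^ (1 - i) / G 1 := by
      rw [Real.rpow_sub hupos, Real.rpow_one, div_div, mul_comm]
    have h3 : f u ≤ (u ^ (1 - i) / G 1) ^ β := by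
      rw [← h2]
      exact Real.rpow_le_rpow (by positivity) h1 hβpos.le
    have h4 : (u ^ (1 - i) / G 1) ^ β = C0 * u ^ ((1 - i) * β) := by
      rw [Real.div_rpow (by positivity) hG1.le, ← Real.rpow_mul hupos.le, hC0def,
        Real.rpow_neg hG1.le]
      ring
    have h5 : u ^ ((1 - i) * β) ≤ u ^ (γ - 1) :=
      Real.rpow_le_rpow_of_exponent_le hu
        (by have := le_max_left ((1 - i) * β + 1) 2⁻¹; linarith)
    calc f u ≤ C0 * u ^ ((1 - i) * β) := h3.trans_eq h4
      _ ≤ C0 * u ^ (γ - 1) := mul_le_mul_of_nonneg_left h5 hC0pos.le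
  -- integrability on `Ioc 1 s` and `Ioc 0 s`
  have hgint : ∀ s : ℝ, 1 ≤ s →
      IntegrableOn (fun u : ℝ => C0 * u ^ (γ - 1)) (Set.Ioc (1:ℝ) s) := by
    intro s hs
    have h : IntervalIntegrable (fun u : ℝ => u ^ (γ - 1)) volume 1 s :=
      intervalIntegral.intervalIntegrable_rpow' (by linarith)
    exact ((intervalIntegrable_iff_integrableOn_Ioc_of_le hs).mp h).const_mul C0
  have hfint1 : ∀ s : ℝ, 1 ≤ s → IntegrableOn f (Set.Ioc (1:ℝ) s) := by
    intro s hs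
    apply (hgint s hs).mono'
    · exact ((hfae s).mono_measure
        (Measure.restrict_mono (Set.Ioc_subset_Ioc_left one_pos.le) le_rfl)).aestronglyMeasurable
    · filter_upwards [ae_restrict_mem measurableSet_Ioc] with u hu
      rw [Real.norm_eq_abs, abs_of_nonneg (hf0 u (by linarith [hu.1]))]
      exact hfub u hu.1.le
  have hfint : ∀ s : ℝ, 1 ≤ s → IntegrableOn f (Set.Ioc (0:ℝ) s) := by
    intro s hs
    rw [show Set.Ioc (0:ℝ) s = Set.Ioc 0 1 ∪ Set.Ioc 1 s from
      (Set.Ioc_union_Ioc_eq_Ioc one_pos.le hs).symm]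
    exact hconv0'.union (hfint1 s hs)
  -- splitting of F and its growth bound
  have hFsplit : ∀ s : ℝ, 1 ≤ s → F s = F 1 + ∫ t in Set.Ioc (1:ℝ) s, f t := by
    intro s hs
    show (∫ t in Set.Ioc (0:ℝ) s, f t) = _
    rw [show Set.Ioc (0:ℝ) s = Set.Ioc 0 1 ∪ Set.Ioc 1 s from
      (Set.Ioc_union_Ioc_eq_Ioc one_pos.le hs).symm,
      setIntegral_union (Set.Ioc_disjoint_Ioc_of_le le_rfl) measurableSet_Ioc hconv0' (hfint1 s hs)]
  have hgval : ∀ s : ℝ, 1 ≤ s →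
      (∫ u in Set.Ioc (1:ℝ) s, C0 * u ^ (γ - 1)) ≤ (C0/γ) * s ^ γ := by
    intro s hs
    rw [← intervalIntegral.integral_of_le hs, intervalIntegral.integral_const_mul,
      integral_rpow (Or.inl (by linarith)), show γ - 1 + 1 = γ by ring]
    have hsγ : (0:ℝ) < s ^ γ := Real.rpow_pos_of_pos (by linarith) γ
    calc C0 * ((s ^ γ - 1 ^ γ) / γ) ≤ C0 * (s ^ γ / γ) := by
          have h1γ : (0:ℝ) ≤ (1:ℝ) ^ γ := by positivity
          gcongr
          linarith
      _ = C0/γ * s ^ γ := by ring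
  have hFub : ∀ s : ℝ, 1 ≤ s → F s ≤ F 1 + (C0/γ) * s ^ γ := by
    intro s hs
    rw [hFsplit s hs]
    have hle : (∫ t in Set.Ioc (1:ℝ) s, f t) ≤ ∫ u in Set.Ioc (1:ℝ) s, C0 * u ^ (γ - 1) :=
      setIntegral_mono_on (hfint1 s hs) (hgint s hs) measurableSet_Ioc
        (fun u hu => hfub u hu.1.le)
    linarith [hgval s hs]
  have hFnonneg : ∀ s : ℝ, 0 ≤ F s := fun s =>
    setIntegral_nonneg measurableSet_Ioc (fun t ht => hf0 t ht.1)
  have hF1nonneg : 0 ≤ F 1 := hFnonneg 1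
  have hFle1 : ∀ s : ℝ, s ≤ 1 → F s ≤ F 1 := by
    intro s hs
    apply setIntegral_mono_set hconv0'
    · filter_upwards [ae_restrict_mem measurableSet_Ioc] with t ht using hf0 t ht.1
    · exact HasSubset.Subset.eventuallyLE (Set.Ioc_subset_Ioc_right hs)
  have hFbound : ∀ M : ℝ, 1 ≤ M → ∀ s : ℝ, s ≤ M → F s ≤ F 1 + (C0/γ) * M ^ γ := by
    intro M hM s hsM
    have hMγ : (0:ℝ) ≤ (C0/γ) * M ^ γ := by positivity
    rcases le_or_gt s 1 with h | h
    · linarith [hFle1 s h]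
    · have h1 := hFub s h.le
      have h2 : s ^ γ ≤ M ^ γ := Real.rpow_le_rpow (by linarith) hsM hγpos.le
      have h3 : (0:ℝ) ≤ C0/γ := by positivity
      nlinarith
  -- Hinv tends to infinity
  have hHinvTend : Filter.Tendsto Hinv Filter.atTop Filter.atTop := by
    rw [Filter.tendsto_atTop_atTop]
    intro M
    set M' : ℝ := max M 1 with hM'
    have hM'1 : (1:ℝ) ≤ M' := le_max_right _ _
    have hB : (0:ℝ) ≤ F 1 + (C0/γ) * M' ^ γ := by positivity
    refine ⟨(F 1 + (C0/γ) * M' ^ γ) ^ ((σ-1)/σ) + 1, fun t ht => ?_⟩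
    have ht0 : (0:ℝ) ≤ t := le_trans (by positivity) ht
    obtain ⟨hHinv0, hHt⟩ := hHinv t ht0
    by_contra hcon
    push_neg at hcon
    have hle : Hinv t ≤ M' := le_trans hcon.le (le_max_left _ _)
    have hF : F (Hinv t) ≤ F 1 + (C0/γ) * M' ^ γ := hFbound M' hM'1 _ hle
    have hteq : t = F (Hinv t) ^ ((σ-1)/σ) := by rw [← hH' _ hHinv0, hHt]
    have hrle : t ≤ (F 1 + (C0/γ) * M' ^ γ) ^ ((σ-1)/σ) := by
      rw [hteq]; exact Real.rpow_le_rpow (hFnonneg _) hF (by positivity)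
    linarith
  -- final assembly
  set c : ℝ := G 1 / (F 1 + C0/γ) with hcdef
  have hD : (0:ℝ) < F 1 + C0/γ := by positivity
  have hc : 0 < c := div_pos hG1 hD
  have hmain : Filter.Tendsto (fun t => c * Hinv t ^ (i - γ)) Filter.atTop Filter.atTop :=
    Filter.Tendsto.const_mul_atTop hc
      ((tendsto_rpow_atTop (by linarith)).comp hHinvTend)
  apply Filter.tendsto_atTop_mono' _ _ hmain
  filter_upwards [hHinvTend.eventually_ge_atTop 1, Filter.eventually_ge_atTop (1:ℝ)]
    with t hs1 ht1
  have ht0 : (0:ℝ) ≤ t := by linarith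
  obtain ⟨hs0, hHt⟩ := hHinv t ht0
  have hspos : (0:ℝ) < Hinv t := by linarith
  have hFs0 : 0 ≤ F (Hinv t) := hFnonneg _
  have hteq : t = F (Hinv t) ^ ((σ-1)/σ) := by rw [← hH' _ hs0, hHt]
  have hFpos : 0 < F (Hinv t) := by
    rcases hFs0.lt_or_eq with h | h
    · exact h
    · exfalso
      rw [← h, Real.zero_rpow (by positivity)] at hteq
      linarith
  have htpow : t ^ (σ/(σ-1)) = F (Hinv t) := by
    conv_lhs => rw [hteq]
    rw [← Real.rpow_mul hFs0, show (σ-1)/σ * (σ/(σ-1)) = 1 by field_simp,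
      Real.rpow_one]
  rw [htpow]
  have hBs : F (Hinv t) ≤ (F 1 + C0/γ) * Hinv t ^ γ := by
    have h1 : F (Hinv t) ≤ F 1 + (C0/γ) * Hinv t ^ γ := hFub _ hs1
    have h2 : (1:ℝ) ≤ Hinv t ^ γ := Real.one_le_rpow hs1 hγpos.le
    nlinarith
  have hnum : G 1 * Hinv t ^ i ≤ G (Hinv t) := hGlb _ hs1
  have heq : c * Hinv t ^ (i - γ) =
      (G 1 * Hinv t ^ i) / ((F 1 + C0/γ) * Hinv t ^ γ) := by
    rw [Real.rpow_sub hspos, hcdef, div_mul_div_comm]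
  rw [heq]
  exact div_le_div₀ (hGpos _ hspos).le hnum hFpos hBs
end
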